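/- Let G be a connected graph with n(G) ≥ 2 and let k ≥ 2. Then dim_ms(G ∘ K_k) = n(G)(k−1) if and only if G is multiset distance irregular. -/

import Mathlib

open SimpleGraph

/-- The multiset representation of `u` with respect to `S`: the multiset of
distances from `u` to the vertices of `S`, counted with multiplicity. -/
noncomputable def mrep {V : Type*} (G : SimpleGraph V) (u : V) (S : Finset V) : Multiset ℕ :=
  S.val.map fun w => G.dist u w

/-- `S` is an outer multiset resolving set of `G`: the multiset representations of
the vertices outside `S` are pairwise distinct. -/
def IsOMR {V : Type*} (G : SimpleGraph V) (S : Finset V) : Prop :=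
  ∀ u ∉ S, ∀ v ∉ S, mrep G u S = mrep G v S → u = v

/-- The outer multiset dimension of `G`. -/
noncomputable def dimMS {V : Type*} (G : SimpleGraph V) [Fintype V] : ℕ :=
  sInf {n | ∃ S : Finset V, S.card = n ∧ IsOMR G S}

/-- The diameter of `G`: the largest distance between vertices of `G`. -/
noncomputable def gdiam {V : Type*} (G : SimpleGraph V) [Fintype V] : ℕ :=
  Finset.univ.sup fun p : V × V => G.dist p.1 p.2

/-- The lexicographic product of two simple graphs: `(g, h)` and `(gʹ, hʹ)` are adjacent
iff `g gʹ` is an edge of `G`, or `g = gʹ` and `h hʹ` is an edge of `H`. -/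
def lexProd {α β : Type*} (G : SimpleGraph α) (H : SimpleGraph β) : SimpleGraph (α × β) where
  Adj p q := G.Adj p.1 q.1 ∨ (p.1 = q.1 ∧ H.Adj p.2 q.2)
  symm := ⟨by
    intro p q h
    rcases h with h | ⟨h1, h2⟩
    · exact Or.inl h.symm
    · exact Or.inr ⟨h1.symm, h2.symm⟩⟩
  loopless := ⟨by
    intro p h
    rcases h with h | ⟨_, h2⟩
    · exact G.irrefl h
    · exact H.irrefl h2⟩


/-- `G` is multiset distance irregular if distinct vertices have different multiset
representations with respect to the whole vertex set. -/
def MultisetDistIrregular {V : Type*} (G : SimpleGraph V) [Fintype V] : Prop :=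
  ∀ u v : V, u ≠ v → mrep G u Finset.univ ≠ mrep G v Finset.univ

section AuxLemmas

variable {V : Type*} {k : ℕ} {G : SimpleGraph V}

private lemma lex_dist_le (hconn : G.Connected) {p₁ p₂ : V × Fin k}
    (q : (lexProd G (⊤ : SimpleGraph (Fin k))).Walk p₁ p₂) :
    G.dist p₁.1 p₂.1 ≤ q.length := by
  induction q with
  | nil => simp [SimpleGraph.dist_self]
  | @cons a b c e q ih =>
    rcases e with h | ⟨h, _⟩
    · calc G.dist a.1 c.1 ≤ G.dist a.1 b.1 + G.dist b.1 c.1 := hconn.dist_triangle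
        _ ≤ 1 + q.length := by
            have h1 : G.dist a.1 b.1 ≤ 1 := by simpa using SimpleGraph.dist_le h.toWalk
            omega
        _ ≤ (Walk.cons (Or.inl h) q).length := by show 1 + q.length ≤ q.length + 1; omega
    · have heq : G.dist a.1 c.1 = G.dist b.1 c.1 := by rw [h]
      rw [heq]
      calc G.dist b.1 c.1 ≤ q.length := ih
        _ ≤ _ := Nat.le_succ _

private lemma lex_lift : ∀ {a b : V} (p : G.Walk a b) (h h' : Fin k), a ≠ b →
    ∃ q : (lexProd G (⊤ : SimpleGraph (Fin k))).Walk (a, h) (b, h'), q.length ≤ p.length := by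
  intro a b p
  induction p with
  | nil => intro h h' hab; exact absurd rfl hab
  | @cons a c b e p ih =>
    intro h h' _
    by_cases hcb : c = b
    · subst hcb
      exact ⟨Walk.cons (Or.inl e) Walk.nil, by show 0 + 1 ≤ p.length + 1; omega⟩
    · obtain ⟨q, hq⟩ := ih h h' hcb
      exact ⟨Walk.cons (Or.inl e) q, by show q.length + 1 ≤ p.length + 1; omega⟩

private lemma lex_dist_ne (hconn : G.Connected) {g g' : V} (hgg : g ≠ g') (h h' : Fin k) :
    (lexProd G (⊤ : SimpleGraph (Fin k))).dist (g, h) (g', h') = G.dist g g' := by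
  obtain ⟨p, hp⟩ := hconn.exists_walk_length_eq_dist g g'
  obtain ⟨q, hq⟩ := lex_lift p h h' hgg
  apply le_antisymm
  · exact (SimpleGraph.dist_le q).trans (hq.trans hp.le)
  · obtain ⟨r, hr⟩ := (SimpleGraph.Reachable.exists_walk_length_eq_dist ⟨q⟩)
    calc G.dist g g' ≤ r.length := lex_dist_le hconn r
      _ = _ := hr

private lemma lex_dist_fiber {g : V} {h h' : Fin k} (hne : h ≠ h') :
    (lexProd G (⊤ : SimpleGraph (Fin k))).dist (g, h) (g, h') = 1 := by
  rw [SimpleGraph.dist_eq_one_iff_adj]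
  exact Or.inr ⟨rfl, by simpa using hne⟩

private lemma multiset_filter_bind {α β : Type*} (p : β → Prop) [DecidablePred p]
    (m : Multiset α) (f : α → Multiset β) :
    (m.bind f).filter p = m.bind fun a => (f a).filter p := by
  induction m using Multiset.induction with
  | empty => simp
  | cons a m ih => simp [Multiset.cons_bind, Multiset.filter_add, ih]

private lemma multiset_bind_replicate {α β : Type*} (c : ℕ) (m : Multiset α) (f : α → β) :
    (m.bind fun a => Multiset.replicate c (f a)) = c • m.map f := by
  induction m using Multiset.induction with
  | empty => simp
  | cons a m ih =>
    rw [Multiset.cons_bind, ih, Multiset.map_cons, ← Multiset.singleton_add, smul_add,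
      Multiset.nsmul_singleton]

private lemma nsmul_right_cancel {α : Type*} {c : ℕ} (hc : c ≠ 0) {s t : Multiset α}
    (h : c • s = c • t) : s = t := by
  classical
  refine Multiset.ext.mpr fun a => ?_
  have := congrArg (Multiset.count a) h
  rw [Multiset.count_nsmul, Multiset.count_nsmul] at this
  exact Nat.eq_of_mul_eq_mul_left (Nat.pos_of_ne_zero hc) this

variable [Fintype V] [DecidableEq V]

private lemma mrep_lex_eq (hconn : G.Connected) (f : V → Fin k) (g : V) :
    mrep (lexProd G (⊤ : SimpleGraph (Fin k))) (g, f g)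
        (Finset.univ.filter fun p : V × Fin k => p.2 ≠ f p.1) =
      (k - 1) • ((1 : ℕ) ::ₘ ((Finset.univ.val : Multiset V).erase g).map (G.dist g)) := by
  classical
  set L := lexProd G (⊤ : SimpleGraph (Fin k)) with hL
  have hval : (Finset.univ.filter fun p : V × Fin k => p.2 ≠ f p.1).val =
      (((Finset.univ.val : Multiset V).bind fun a =>
        (Finset.univ.val : Multiset (Fin k)).map (Prod.mk a)).filter
          fun p : V × Fin k => p.2 ≠ f p.1) := by
    rw [Finset.filter_val]
    congr 1
  rw [mrep, hval, multiset_filter_bind, Multiset.map_bind]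
  have hstep : ∀ a : V, ((((Finset.univ.val : Multiset (Fin k)).map (Prod.mk a)).filter
        fun p : V × Fin k => p.2 ≠ f p.1).map fun w => L.dist (g, f g) w) =
      Multiset.replicate (k - 1) (if a = g then 1 else G.dist g a) := by
    intro a
    rw [Multiset.filter_map]
    rw [Multiset.map_map]
    have hmc : ∀ h ∈ (Finset.univ.val : Multiset (Fin k)).filter
        ((fun p : V × Fin k => p.2 ≠ f p.1) ∘ Prod.mk a),
        ((fun w => L.dist (g, f g) w) ∘ Prod.mk a) h = (if a = g then 1 else G.dist g a) := by
      intro h hh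
      have hhf : h ≠ f a := by
        have := Multiset.of_mem_filter hh
        simpa using this
      by_cases hag : a = g
      · subst hag
        rw [if_pos rfl]
        exact lex_dist_fiber (fun e => hhf e.symm)
      · rw [if_neg hag]
        exact lex_dist_ne hconn (fun e => hag e.symm) _ _
    rw [Multiset.map_congr rfl hmc, Multiset.map_const']
    congr 1
    have : ((Finset.univ.val : Multiset (Fin k)).filter
        ((fun p : V × Fin k => p.2 ≠ f p.1) ∘ Prod.mk a)) =
        ((Finset.univ.filter fun h : Fin k => h ≠ f a)).val := by
      rw [Finset.filter_val]
      apply Multiset.filter_congr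
      intro x _
      simp [Function.comp]
    rw [this]
    have h2 : (Finset.univ.filter fun h : Fin k => h ≠ f a) = Finset.univ.erase (f a) :=
      Finset.filter_ne' _ _
    rw [← Finset.card_def, h2, Finset.card_erase_of_mem (Finset.mem_univ _)]
    simp
  rw [Multiset.bind_congr (fun a _ => hstep a)]
  rw [multiset_bind_replicate]
  congr 1
  have hsplit : (Finset.univ.val : Multiset V) = g ::ₘ (Finset.univ.val : Multiset V).erase g :=
    (Multiset.cons_erase (Finset.mem_univ g)).symm
  conv_lhs => rw [hsplit]
  rw [Multiset.map_cons, if_pos rfl]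
  congr 1
  apply Multiset.map_congr rfl
  intro a ha
  have hag : a ≠ g := by
    intro e
    subst e
    exact (Finset.univ.nodup.notMem_erase) ha
  rw [if_neg hag]

private lemma mrep_full_eq (g : V) :
    mrep G g Finset.univ =
      (0 : ℕ) ::ₘ ((Finset.univ.val : Multiset V).erase g).map (G.dist g) := by
  rw [mrep]
  conv_lhs => rw [(Multiset.cons_erase (Finset.mem_univ g)).symm]
  rw [Multiset.map_cons, SimpleGraph.dist_self]

private lemma key_iff (hconn : G.Connected) (hk : 2 ≤ k) (f : V → Fin k) (g g₂ : V) :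
    (mrep (lexProd G (⊤ : SimpleGraph (Fin k))) (g, f g)
        (Finset.univ.filter fun p : V × Fin k => p.2 ≠ f p.1) =
      mrep (lexProd G (⊤ : SimpleGraph (Fin k))) (g₂, f g₂)
        (Finset.univ.filter fun p : V × Fin k => p.2 ≠ f p.1)) ↔
      mrep G g Finset.univ = mrep G g₂ Finset.univ := by
  rw [mrep_lex_eq hconn f g, mrep_lex_eq hconn f g₂, mrep_full_eq g, mrep_full_eq g₂]
  constructor
  · intro h
    have h1 := nsmul_right_cancel (c := k - 1) (by omega) h
    rw [Multiset.cons_inj_right] at h1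
    rw [h1]
  · intro h
    rw [Multiset.cons_inj_right] at h
    rw [h]

private lemma fiber_eq (hconn : G.Connected) {S : Finset (V × Fin k)}
    (hS : IsOMR (lexProd G (⊤ : SimpleGraph (Fin k))) S) {g : V} {h h' : Fin k}
    (h1 : (g, h) ∉ S) (h2 : (g, h') ∉ S) : h = h' := by
  set L := lexProd G (⊤ : SimpleGraph (Fin k)) with hL
  have heq : mrep L (g, h) S = mrep L (g, h') S := by
    apply Multiset.map_congr rfl
    intro w hw
    have hwS : w ∈ S := hw
    obtain ⟨gw, hw2⟩ := w
    by_cases hgw : gw = g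
    · subst hgw
      have hne1 : h ≠ hw2 := fun e => h1 (by rwa [e])
      have hne2 : h' ≠ hw2 := fun e => h2 (by rwa [e])
      rw [lex_dist_fiber hne1, lex_dist_fiber hne2]
    · rw [lex_dist_ne hconn (fun e => hgw e.symm), lex_dist_ne hconn (fun e => hgw e.symm)]
  have := hS _ h1 _ h2 heq
  exact congrArg Prod.snd this

end AuxLemmas

theorem stmt_13 (V : Type*) [Fintype V] (G : SimpleGraph V)
    (hconn : G.Connected) (hn : 2 ≤ Fintype.card V) (k : ℕ) (hk : 2 ≤ k) :
    dimMS (lexProd G (⊤ : SimpleGraph (Fin k))) = Fintype.card V * (k - 1) ↔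
      MultisetDistIrregular G := by
  classical
  set L := lexProd G (⊤ : SimpleGraph (Fin k)) with hL
  set N := Fintype.card V with hN
  have hcardVk : Fintype.card (V × Fin k) = N * k := by simp [Fintype.card_prod, hN]
  have h3 : N * (k - 1) + N = N * k := by
    obtain ⟨k', rfl⟩ : ∃ k', k = k' + 1 := ⟨k - 1, by omega⟩
    simp [Nat.mul_succ]
  have compl_le : ∀ S : Finset (V × Fin k), IsOMR L S → Sᶜ.card ≤ N := by
    intro S hS
    have hinj : Set.InjOn Prod.fst (↑(Sᶜ) : Set (V × Fin k)) := by
      intro p hp q hq hpq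
      simp only [Finset.coe_mem, Finset.mem_coe, Finset.mem_compl] at hp hq
      have hp' : (p.1, p.2) ∉ S := by simpa using hp
      have hq' : (p.1, q.2) ∉ S := by rw [hpq]; simpa using hq
      have := fiber_eq hconn hS hp' hq'
      exact Prod.ext_iff.mpr ⟨hpq, this⟩
    have := Finset.card_le_card_of_injOn Prod.fst (fun a _ => Finset.mem_univ a.1) hinj
    simpa using this
  have lb : ∀ n ∈ {n | ∃ S : Finset (V × Fin k), S.card = n ∧ IsOMR L S}, N * (k - 1) ≤ n := by
    rintro n ⟨S, rfl, hS⟩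
    have h1 := Finset.card_add_card_compl S
    rw [hcardVk] at h1
    have h2 := compl_le S hS
    omega
  have huniv : (N * k) ∈ {n | ∃ S : Finset (V × Fin k), S.card = n ∧ IsOMR L S} := by
    refine ⟨Finset.univ, ?_, ?_⟩
    · rw [Finset.card_univ, hcardVk]
    · intro u hu
      exact absurd (Finset.mem_univ u) hu
  constructor
  · intro hdim
    have hmem : N * (k - 1) ∈ {n | ∃ S : Finset (V × Fin k), S.card = n ∧ IsOMR L S} := by
      have := Nat.sInf_mem (⟨N * k, huniv⟩ :
        Set.Nonempty {n | ∃ S : Finset (V × Fin k), S.card = n ∧ IsOMR L S})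
      rwa [show sInf {n | ∃ S : Finset (V × Fin k), S.card = n ∧ IsOMR L S} = dimMS L from rfl,
        hdim] at this
    obtain ⟨S, hScard, hSomr⟩ := hmem
    have h1 := Finset.card_add_card_compl S
    rw [hcardVk] at h1
    have h2 := compl_le S hSomr
    have hc : Sᶜ.card = N := by omega
    have hinj : Set.InjOn Prod.fst (↑(Sᶜ) : Set (V × Fin k)) := by
      intro p hp q hq hpq
      simp only [Finset.mem_coe, Finset.mem_compl] at hp hq
      have hp' : (p.1, p.2) ∉ S := by simpa using hp
      have hq' : (p.1, q.2) ∉ S := by rw [hpq]; simpa using hq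
      exact Prod.ext_iff.mpr ⟨hpq, fiber_eq hconn hSomr hp' hq'⟩
    have himg : Sᶜ.image Prod.fst = Finset.univ := by
      apply Finset.eq_univ_of_card
      rw [Finset.card_image_of_injOn hinj, hc, hN]
    have hex : ∀ g : V, ∃ h : Fin k, (g, h) ∉ S := by
      intro g
      have : g ∈ Sᶜ.image Prod.fst := himg ▸ Finset.mem_univ g
      obtain ⟨p, hp, hp1⟩ := Finset.mem_image.mp this
      refine ⟨p.2, ?_⟩
      rw [← hp1]
      have : p ∉ S := Finset.mem_compl.mp hp
      simpa using this
    choose f hf using hex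
    have hchar : ∀ p : V × Fin k, p ∉ S ↔ p.2 = f p.1 := by
      intro p
      constructor
      · intro hp
        have hp' : (p.1, p.2) ∉ S := by simpa using hp
        exact fiber_eq hconn hSomr hp' (hf p.1)
      · intro hp
        have : p = (p.1, f p.1) := by simpa using congrArg (Prod.mk p.1) hp
        rw [this]
        exact hf p.1
    have hSeq : S = Finset.univ.filter (fun p : V × Fin k => p.2 ≠ f p.1) := by
      ext p
      simp only [Finset.mem_filter, Finset.mem_univ, true_and]
      rw [← not_iff_not]
      push_neg
      exact hchar p
    intro g g₂ hgg hmr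
    apply hgg
    have hm : mrep L (g, f g) S = mrep L (g₂, f g₂) S := by
      rw [hSeq]
      exact (key_iff hconn hk f g g₂).mpr hmr
    have := hSomr _ ((hchar _).mpr rfl) _ ((hchar _).mpr rfl) hm
    exact congrArg Prod.fst this
  · intro hmdi
    set f : V → Fin k := fun _ => (⟨0, by omega⟩ : Fin k) with hfdef
    set S₀ := Finset.univ.filter (fun p : V × Fin k => p.2 ≠ f p.1) with hS₀
    have hchar : ∀ p : V × Fin k, p ∉ S₀ ↔ p.2 = f p.1 := by
      intro p
      simp [hS₀]
    have homr : IsOMR L S₀ := by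
      intro u hu v hv hmr
      have hu2 := (hchar u).mp hu
      have hv2 := (hchar v).mp hv
      have hu' : u = (u.1, f u.1) := by simpa using congrArg (Prod.mk u.1) hu2
      have hv' : v = (v.1, f v.1) := by simpa using congrArg (Prod.mk v.1) hv2
      rw [hu', hv'] at hmr
      have hkey := (key_iff hconn hk f u.1 v.1).mp hmr
      have h12 : u.1 = v.1 := by
        by_contra hne
        exact hmdi u.1 v.1 hne hkey
      rw [hu', hv', h12]
    have hcompl : S₀ᶜ = Finset.univ.image (fun g : V => (g, f g)) := by
      ext p
      simp only [Finset.mem_compl, Finset.mem_image, Finset.mem_univ, true_and]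
      rw [hchar p]
      constructor
      · intro hp
        exact ⟨p.1, by simpa using (congrArg (Prod.mk p.1) hp).symm⟩
      · rintro ⟨a, rfl⟩
        rfl
    have hcard : S₀.card = N * (k - 1) := by
      have hc : S₀ᶜ.card = N := by
        rw [hcompl, Finset.card_image_of_injective _ (fun a b hab => congrArg Prod.fst hab),
          Finset.card_univ]
      have h1 := Finset.card_add_card_compl S₀
      rw [hcardVk] at h1
      omega
    show sInf {n | ∃ S : Finset (V × Fin k), S.card = n ∧ IsOMR L S} = N * (k - 1)
    apply le_antisymm
    · exact Nat.sInf_le ⟨S₀, hcard, homr⟩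
    · exact le_csInf ⟨_, huniv⟩ lb
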